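/- Let K be a field. The (not necessarily unital) K-subalgebra of the quotient algebra K[x,y]/(x⁴ − x, y⁴ − y, xy) generated by the residue classes of x and y (equivalently, the K-linear span of the classes of x, x², x³, y, y², y³) is isomorphic as a K-algebra to K[a,b]/(ab, a³ + b³ − 1). In particular this subalgebra is 6-dimensional and unital, with unit the class of x³ + y³. -/

import Mathlib

set_option synthInstance.maxHeartbeats 800000
set_option maxHeartbeats 4000000
open MvPolynomial

/-- The (not necessarily unital) `K`-subalgebra `T` of
`K[x,y]/(x⁴ − x, y⁴ − y, xy)` generated by the residue classes of `x` and `y`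
is isomorphic as a `K`-algebra to `K[a,b]/(ab, a³ + b³ − 1)`.  In particular `T` is
6-dimensional and unital, with unit the class of `x³ + y³`. -/
theorem stmt11 (K : Type*) [Field K]
    (Q : Ideal (MvPolynomial (Fin 2) K))
    (hQ : Q = Ideal.span {X 0 ^ 4 - X 0, X 1 ^ 4 - X 1, X 0 * X 1})
    (H : Ideal (MvPolynomial (Fin 2) K))
    (hH : H = Ideal.span {X 0 * X 1, X 0 ^ 3 + X 1 ^ 3 - 1})
    (T : NonUnitalSubalgebra K (MvPolynomial (Fin 2) K ⧸ Q))
    (hT : T = NonUnitalAlgebra.adjoin K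
      {Ideal.Quotient.mk Q (X 0), Ideal.Quotient.mk Q (X 1)}) :
    (∃ e : T ≃ₗ[K] (MvPolynomial (Fin 2) K ⧸ H),
      ∀ a b : T, e (a * b) = e a * e b) ∧
    Module.finrank K T = 6 ∧
    Ideal.Quotient.mk Q (X 0 ^ 3 + X 1 ^ 3) ∈ T ∧
    (∀ w : MvPolynomial (Fin 2) K ⧸ Q, w ∈ T →
      Ideal.Quotient.mk Q (X 0 ^ 3 + X 1 ^ 3) * w = w ∧
      w * Ideal.Quotient.mk Q (X 0 ^ 3 + X 1 ^ 3) = w) := by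
  set x : _ ⧸ Q := Ideal.Quotient.mk Q (X 0) with hxd
  set y : _ ⧸ Q := Ideal.Quotient.mk Q (X 1) with hyd
  set a : _ ⧸ H := Ideal.Quotient.mk H (X 0) with had
  set b : _ ⧸ H := Ideal.Quotient.mk H (X 1) with hbd
  have hab : a * b = 0 := by
    rw [had, hbd, ← map_mul, Ideal.Quotient.eq_zero_iff_mem, hH]
    exact Ideal.subset_span (by simp)
  have hab3 : a ^ 3 + b ^ 3 = 1 := by
    rw [had, hbd, ← map_pow, ← map_pow, ← map_add, ← map_one (Ideal.Quotient.mk H),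
      Ideal.Quotient.mk_eq_mk_iff_sub_mem, hH]
    exact Ideal.subset_span (by simp)
  have hρker : ∀ p ∈ Q, (aeval ![a, b] : MvPolynomial (Fin 2) K →ₐ[K] MvPolynomial (Fin 2) K ⧸ H) p = 0 := by
    have hle : Q ≤ RingHom.ker ((aeval ![a, b] : MvPolynomial (Fin 2) K →ₐ[K] MvPolynomial (Fin 2) K ⧸ H) :
        MvPolynomial (Fin 2) K →+* MvPolynomial (Fin 2) K ⧸ H) := by
      rw [hQ, Ideal.span_le]
      rintro p hp
      simp only [Set.mem_insert_iff, Set.mem_singleton_iff] at hp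
      rcases hp with rfl | rfl | rfl <;>
        simp only [SetLike.mem_coe, RingHom.mem_ker, RingHom.coe_coe, map_sub, map_pow, map_mul,
          aeval_X, Matrix.cons_val_zero, Matrix.cons_val_one, Matrix.head_cons]
      · linear_combination a * hab3 - b ^ 2 * hab
      · linear_combination b * hab3 - a ^ 2 * hab
      · exact hab
    intro p hp
    exact RingHom.mem_ker.mp (hle hp)
  set ρ : (_ ⧸ Q) →ₐ[K] (_ ⧸ H) := Ideal.Quotient.liftₐ Q (aeval ![a, b]) hρker with hρd
  have hρmk : ∀ p : MvPolynomial (Fin 2) K, ρ (Ideal.Quotient.mk Q p) = Ideal.Quotient.mk H p := by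
    have : (aeval ![a, b] : MvPolynomial (Fin 2) K →ₐ[K] MvPolynomial (Fin 2) K ⧸ H) = Ideal.Quotient.mkₐ K H := by
      apply MvPolynomial.algHom_ext
      intro i
      fin_cases i <;> simp [had, hbd, Ideal.Quotient.mkₐ_eq_mk]
    intro p
    rw [hρd, Ideal.Quotient.liftₐ_apply]
    change (aeval ![a, b] : MvPolynomial (Fin 2) K →ₐ[K] MvPolynomial (Fin 2) K ⧸ H) p = _
    rw [this]
    rfl
  -- span N
  set N : Submodule K (MvPolynomial (Fin 2) K ⧸ Q) :=
    Submodule.span K {x, x ^ 2, x ^ 3, y, y ^ 2, y ^ 3} with hNd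
  have hxy : x * y = 0 := by
    rw [hxd, hyd, ← map_mul, Ideal.Quotient.eq_zero_iff_mem, hQ]
    exact Ideal.subset_span (by simp)
  have hx4 : x ^ 4 = x := by
    rw [hxd, ← map_pow, Ideal.Quotient.mk_eq_mk_iff_sub_mem, hQ]
    exact Ideal.subset_span (by simp)
  have hy4 : y ^ 4 = y := by
    rw [hyd, ← map_pow, Ideal.Quotient.mk_eq_mk_iff_sub_mem, hQ]
    exact Ideal.subset_span (by simp)
  have hx5 : x ^ 5 = x ^ 2 := by linear_combination x * hx4
  have hx6 : x ^ 6 = x ^ 3 := by linear_combination x ^ 2 * hx4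
  have hy5 : y ^ 5 = y ^ 2 := by linear_combination y * hy4
  have hy6 : y ^ 6 = y ^ 3 := by linear_combination y ^ 2 * hy4
  have hsx1 : x ∈ ({x, x ^ 2, x ^ 3, y, y ^ 2, y ^ 3} : Set (MvPolynomial (Fin 2) K ⧸ Q)) :=
    Set.mem_insert _ _
  have hsx2 : x ^ 2 ∈ ({x, x ^ 2, x ^ 3, y, y ^ 2, y ^ 3} : Set (MvPolynomial (Fin 2) K ⧸ Q)) :=
    Set.mem_insert_of_mem _ (Set.mem_insert _ _)
  have hsx3 : x ^ 3 ∈ ({x, x ^ 2, x ^ 3, y, y ^ 2, y ^ 3} : Set (MvPolynomial (Fin 2) K ⧸ Q)) :=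
    Set.mem_insert_of_mem _ (Set.mem_insert_of_mem _ (Set.mem_insert _ _))
  have hsy1 : y ∈ ({x, x ^ 2, x ^ 3, y, y ^ 2, y ^ 3} : Set (MvPolynomial (Fin 2) K ⧸ Q)) :=
    Set.mem_insert_of_mem _ (Set.mem_insert_of_mem _ (Set.mem_insert_of_mem _
      (Set.mem_insert _ _)))
  have hsy2 : y ^ 2 ∈ ({x, x ^ 2, x ^ 3, y, y ^ 2, y ^ 3} : Set (MvPolynomial (Fin 2) K ⧸ Q)) :=
    Set.mem_insert_of_mem _ (Set.mem_insert_of_mem _ (Set.mem_insert_of_mem _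
      (Set.mem_insert_of_mem _ (Set.mem_insert _ _))))
  have hsy3 : y ^ 3 ∈ ({x, x ^ 2, x ^ 3, y, y ^ 2, y ^ 3} : Set (MvPolynomial (Fin 2) K ⧸ Q)) :=
    Set.mem_insert_of_mem _ (Set.mem_insert_of_mem _ (Set.mem_insert_of_mem _
      (Set.mem_insert_of_mem _ (Set.mem_insert_of_mem _ rfl))))
  have hNx1 : x ∈ N := Submodule.subset_span hsx1
  have hNx2 : x ^ 2 ∈ N := Submodule.subset_span hsx2
  have hNx3 : x ^ 3 ∈ N := Submodule.subset_span hsx3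
  have hNy1 : y ∈ N := Submodule.subset_span hsy1
  have hNy2 : y ^ 2 ∈ N := Submodule.subset_span hsy2
  have hNy3 : y ^ 3 ∈ N := Submodule.subset_span hsy3
  have hxn : ∀ n : ℕ, 1 ≤ n → n ≤ 6 → x ^ n ∈ N := by
    intro n h1 h6
    interval_cases n
    · rw [pow_one]; exact hNx1
    · exact hNx2
    · exact hNx3
    · rw [hx4]; exact hNx1
    · rw [hx5]; exact hNx2
    · rw [hx6]; exact hNx3
  have hyn : ∀ n : ℕ, 1 ≤ n → n ≤ 6 → y ^ n ∈ N := by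
    intro n h1 h6
    interval_cases n
    · rw [pow_one]; exact hNy1
    · exact hNy2
    · exact hNy3
    · rw [hy4]; exact hNy1
    · rw [hy5]; exact hNy2
    · rw [hy6]; exact hNy3
  have hm11 : x * y = 0 := hxy
  have hm12 : x * y ^ 2 = 0 := by linear_combination y * hxy
  have hm13 : x * y ^ 3 = 0 := by linear_combination y ^ 2 * hxy
  have hm21 : x ^ 2 * y = 0 := by linear_combination x * hxy
  have hm22 : x ^ 2 * y ^ 2 = 0 := by linear_combination x * y * hxy
  have hm23 : x ^ 2 * y ^ 3 = 0 := by linear_combination x * y ^ 2 * hxy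
  have hm31 : x ^ 3 * y = 0 := by linear_combination x ^ 2 * hxy
  have hm32 : x ^ 3 * y ^ 2 = 0 := by linear_combination x ^ 2 * y * hxy
  have hm33 : x ^ 3 * y ^ 3 = 0 := by linear_combination x ^ 2 * y ^ 2 * hxy
  have hgen : ∀ p ∈ ({x, x ^ 2, x ^ 3, y, y ^ 2, y ^ 3} : Set (MvPolynomial (Fin 2) K ⧸ Q)),
      ∀ q ∈ ({x, x ^ 2, x ^ 3, y, y ^ 2, y ^ 3} : Set (MvPolynomial (Fin 2) K ⧸ Q)),
      p * q ∈ N := by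
    intro p hp q hq
    simp only [Set.mem_insert_iff, Set.mem_singleton_iff] at hp hq
    rcases hp with rfl | rfl | rfl | rfl | rfl | rfl <;>
      rcases hq with rfl | rfl | rfl | rfl | rfl | rfl <;>
      ring_nf <;>
      first
        | exact hxn _ (by norm_num) (by norm_num)
        | exact hyn _ (by norm_num) (by norm_num)
        | (simp only [hm11, hm12, hm13, hm21, hm22, hm23, hm31, hm32, hm33]; exact N.zero_mem)
        | (rw [mul_comm]; simp only [hm11, hm12, hm13, hm21, hm22, hm23, hm31, hm32, hm33]
           exact N.zero_mem)
  have hclosed : ∀ p ∈ N, ∀ q ∈ N, p * q ∈ N := by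
    intro p hp q hq
    have := Submodule.mul_mem_mul (M := N) (N := N) hp hq
    rw [hNd, Submodule.span_mul_span] at this
    refine Submodule.span_le.mpr ?_ this
    rw [Set.mul_subset_iff]
    exact hgen
  -- the idempotent u
  set u : MvPolynomial (Fin 2) K ⧸ Q := Ideal.Quotient.mk Q (X 0 ^ 3 + X 1 ^ 3) with hud
  have hu : u = x ^ 3 + y ^ 3 := by rw [hud, map_add, map_pow, map_pow, hxd, hyd]
  have hu2 : u * u = u := by
    rw [hu]; linear_combination x ^ 2 * hx4 + y ^ 2 * hy4 + 2 * x ^ 2 * y ^ 2 * hxy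
  have huN : u ∈ N := by rw [hu]; exact N.add_mem hNx3 hNy3
  have hux : ∀ w ∈ N, u * w = w := by
    intro w hw
    induction hw using Submodule.span_induction with
    | mem z hz =>
      simp only [Set.mem_insert_iff, Set.mem_singleton_iff] at hz
      rcases hz with rfl | rfl | rfl | rfl | rfl | rfl <;> rw [hu]
      · linear_combination hx4 + y ^ 2 * hxy
      · linear_combination x * hx4 + x * y ^ 2 * hxy
      · linear_combination x ^ 2 * hx4 + x ^ 2 * y ^ 2 * hxy
      · linear_combination hy4 + x ^ 2 * hxy
      · linear_combination y * hy4 + x ^ 2 * y * hxy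
      · linear_combination y ^ 2 * hy4 + x ^ 2 * y ^ 2 * hxy
    | zero => rw [mul_zero]
    | add p q hp hq ihp ihq => rw [mul_add, ihp, ihq]
    | smul c p hp ihp => rw [mul_smul_comm, ihp]
  -- T = N
  have hTleN : ∀ w ∈ T, w ∈ N := by
    intro w hw
    rw [hT] at hw
    have : NonUnitalAlgebra.adjoin K
        ({Ideal.Quotient.mk Q (X 0), Ideal.Quotient.mk Q (X 1)} :
          Set (MvPolynomial (Fin 2) K ⧸ Q)) ≤ N.toNonUnitalSubalgebra (fun p q hp hq => hclosed p hp q hq) := by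
      apply NonUnitalAlgebra.adjoin_le
      rintro z hz
      simp only [Set.mem_insert_iff, Set.mem_singleton_iff] at hz
      rcases hz with rfl | rfl
      · exact hNx1
      · exact hNy1
    exact this hw
  have hNleT : ∀ w ∈ N, w ∈ T := by
    intro w hw
    have hxT : x ∈ T := by
      rw [hT]; exact NonUnitalAlgebra.subset_adjoin K (Set.mem_insert _ _)
    have hyT : y ∈ T := by
      rw [hT]
      exact NonUnitalAlgebra.subset_adjoin K (Set.mem_insert_of_mem _ rfl)
    have : N ≤ T.toSubmodule := by
      rw [hNd, Submodule.span_le]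
      rintro z hz
      simp only [Set.mem_insert_iff, Set.mem_singleton_iff] at hz
      simp only [SetLike.mem_coe, NonUnitalSubalgebra.mem_toSubmodule]
      rcases hz with rfl | rfl | rfl | rfl | rfl | rfl
      · exact hxT
      · rw [sq]; exact mul_mem hxT hxT
      · rw [pow_succ, sq]; exact mul_mem (mul_mem hxT hxT) hxT
      · exact hyT
      · rw [sq]; exact mul_mem hyT hyT
      · rw [pow_succ, sq]; exact mul_mem (mul_mem hyT hyT) hyT
    exact this hw
  -- multiplication by u lands in N
  have hmulu : ∀ w : MvPolynomial (Fin 2) K ⧸ Q, u * w ∈ N := by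
    have key : ∀ p : MvPolynomial (Fin 2) K, u * Ideal.Quotient.mk Q p ∈ N := by
      intro p
      induction p using MvPolynomial.induction_on with
      | C r =>
        have : (Ideal.Quotient.mk Q) (C r) = algebraMap K (MvPolynomial (Fin 2) K ⧸ Q) r := by
          rw [IsScalarTower.algebraMap_apply K (MvPolynomial (Fin 2) K)
            (MvPolynomial (Fin 2) K ⧸ Q), Ideal.Quotient.algebraMap_eq,
            MvPolynomial.algebraMap_eq]
        rw [this, mul_comm, ← Algebra.smul_def]
        exact N.smul_mem r huN
      | add p q hp hq => rw [map_add, mul_add]; exact N.add_mem hp hq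
      | mul_X p i hp =>
        rw [map_mul, ← mul_assoc]
        fin_cases i
        · exact hclosed _ hp _ hNx1
        · exact hclosed _ hp _ hNy1
    intro w
    obtain ⟨p, rfl⟩ := Ideal.Quotient.mk_surjective w
    exact key p
  -- the inverse linear map
  set g0 : MvPolynomial (Fin 2) K →ₗ[MvPolynomial (Fin 2) K] MvPolynomial (Fin 2) K ⧸ Q :=
    { toFun := fun p => u * Ideal.Quotient.mk Q p
      map_add' := fun p q => by rw [map_add, mul_add]
      map_smul' := fun c p => by
        simp only [smul_eq_mul, map_mul, RingHom.id_apply]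
        have : c • (u * Ideal.Quotient.mk Q p) =
            Ideal.Quotient.mk Q c * (u * Ideal.Quotient.mk Q p) := by
          rw [hud, ← map_mul, ← map_mul]
          exact Submodule.Quotient.mk_smul ..
        rw [this]; ring } with hg0d
  have hg0 : ∀ p : MvPolynomial (Fin 2) K, g0 p = u * Ideal.Quotient.mk Q p := fun p => rfl
  have hker : H ≤ LinearMap.ker g0 := by
    intro h hh
    rw [hH, Ideal.mem_span_pair] at hh
    obtain ⟨c, d, hcd⟩ := hh
    rw [LinearMap.mem_ker, hg0, ← hcd]
    simp only [map_add, map_mul, map_sub, map_one, map_pow]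
    rw [← hxd, ← hyd]
    have expand : u * (Ideal.Quotient.mk Q c * (x * y) +
        Ideal.Quotient.mk Q d * (x ^ 3 + y ^ 3 - 1)) =
        (u * Ideal.Quotient.mk Q c) * (x * y) +
        Ideal.Quotient.mk Q d * (u * u - u) := by rw [hu]; ring
    rw [expand, hxy, hu2]
    ring
  set g1 : (MvPolynomial (Fin 2) K ⧸ H) →ₗ[MvPolynomial (Fin 2) K] MvPolynomial (Fin 2) K ⧸ Q :=
    Submodule.liftQ H g0 hker with hg1d
  have hg1 : ∀ p : MvPolynomial (Fin 2) K,
      g1 (Ideal.Quotient.mk H p) = u * Ideal.Quotient.mk Q p := fun p => rfl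
  set g : (MvPolynomial (Fin 2) K ⧸ H) →ₗ[K] MvPolynomial (Fin 2) K ⧸ Q :=
    g1.restrictScalars K with hgd
  have hg : ∀ p : MvPolynomial (Fin 2) K,
      g (Ideal.Quotient.mk H p) = u * Ideal.Quotient.mk Q p := fun p => hg1 p
  have hgT : ∀ s : MvPolynomial (Fin 2) K ⧸ H, g s ∈ T := by
    intro s
    obtain ⟨p, rfl⟩ := Ideal.Quotient.mk_surjective s
    rw [hg]
    exact hNleT _ (hmulu _)
  -- the linear maps f' and g'
  set f' : T →ₗ[K] MvPolynomial (Fin 2) K ⧸ H :=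
    { toFun := fun t => ρ t.1
      map_add' := fun s t => by simp
      map_smul' := fun c t => by simp } with hf'd
  set g' : (MvPolynomial (Fin 2) K ⧸ H) →ₗ[K] T :=
    { toFun := fun s => ⟨g s, hgT s⟩
      map_add' := fun s t => by ext; simp
      map_smul' := fun c s => by ext; simp } with hg'd
  have hρu : ρ u = 1 := by
    rw [hud, hρmk, map_add, map_pow, map_pow, ← had, ← hbd, hab3]
  have h₁ : f'.comp g' = LinearMap.id := by
    apply LinearMap.ext
    intro s
    obtain ⟨p, rfl⟩ := Ideal.Quotient.mk_surjective s
    simp only [LinearMap.comp_apply, LinearMap.id_apply, hg'd, hf'd, LinearMap.coe_mk,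
      AddHom.coe_mk]
    rw [hg, map_mul, hρu, one_mul, hρmk]
  have h₂ : g'.comp f' = LinearMap.id := by
    apply LinearMap.ext
    intro t
    apply Subtype.ext
    simp only [LinearMap.comp_apply, LinearMap.id_apply, hg'd, hf'd, LinearMap.coe_mk,
      AddHom.coe_mk]
    obtain ⟨p, hp⟩ := Ideal.Quotient.mk_surjective (t : MvPolynomial (Fin 2) K ⧸ Q)
    rw [← hp, hρmk, hg, hp]
    exact hux _ (hTleN _ t.2)
  set e : T ≃ₗ[K] MvPolynomial (Fin 2) K ⧸ H := LinearEquiv.ofLinear f' g' h₁ h₂ with hed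
  have hemul : ∀ s t : T, e (s * t) = e s * e t := by
    intro s t
    simp only [hed, LinearEquiv.ofLinear_apply, hf'd, LinearMap.coe_mk, AddHom.coe_mk]
    rw [MulMemClass.coe_mul, map_mul]
  -- linear independence of x, x², x³, y, y², y³
  set fA : Polynomial K := Polynomial.X ^ 4 - Polynomial.X with hfAd
  have hmonic : fA.Monic :=
    Polynomial.monic_X_pow_sub (by rw [Polynomial.degree_X]; norm_num)
  have hdeg : fA.natDegree = 4 := by
    rw [hfAd]
    compute_degree!
  set A : Type _ := AdjoinRoot fA with hAd
  set r : A := AdjoinRoot.root fA with hrd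
  have hr4 : r ^ 4 = r := by
    have h0 := AdjoinRoot.mk_self (f := fA)
    rw [hfAd] at h0
    rw [map_sub, map_pow, AdjoinRoot.mk_X] at h0
    rw [hrd]
    exact sub_eq_zero.mp h0
  have hθker : ∀ p ∈ Q,
      (aeval ![((r, 0) : A × A), ((0, r) : A × A)] : MvPolynomial (Fin 2) K →ₐ[K] A × A) p
        = 0 := by
    have hle : Q ≤ RingHom.ker
        ((aeval ![((r, 0) : A × A), ((0, r) : A × A)] :
          MvPolynomial (Fin 2) K →ₐ[K] A × A) : MvPolynomial (Fin 2) K →+* A × A) := by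
      rw [hQ, Ideal.span_le]
      rintro p hp
      simp only [Set.mem_insert_iff, Set.mem_singleton_iff] at hp
      rcases hp with rfl | rfl | rfl <;>
        simp only [SetLike.mem_coe, RingHom.mem_ker, RingHom.coe_coe, map_sub, map_pow, map_mul,
          aeval_X, Matrix.cons_val_zero, Matrix.cons_val_one, Matrix.head_cons] <;>
        rw [Prod.ext_iff] <;>
        constructor <;>
        simp [Prod.pow_fst, Prod.pow_snd, hr4]
    intro p hp
    exact RingHom.mem_ker.mp (hle hp)
  set θ : (MvPolynomial (Fin 2) K ⧸ Q) →ₐ[K] A × A :=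
    Ideal.Quotient.liftₐ Q (aeval ![((r, 0) : A × A), ((0, r) : A × A)]) hθker with hθd
  have hθmk : ∀ p : MvPolynomial (Fin 2) K,
      θ (Ideal.Quotient.mk Q p) = aeval ![((r, 0) : A × A), ((0, r) : A × A)] p := by
    intro p
    rw [hθd, Ideal.Quotient.liftₐ_apply]
    change (aeval ![((r, 0) : A × A), ((0, r) : A × A)] : MvPolynomial (Fin 2) K →ₐ[K] A × A) p = _
    rfl
  have hθx : θ x = ((r, 0) : A × A) := by rw [hxd, hθmk]; simp
  have hθy : θ y = ((0, r) : A × A) := by rw [hyd, hθmk]; simp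
  set pb : PowerBasis K A := AdjoinRoot.powerBasis' hmonic with hpbd
  have hpbdim : pb.dim = 4 := hdeg
  set w : Fin 3 ⊕ Fin 3 → MvPolynomial (Fin 2) K ⧸ Q :=
    Sum.elim (fun i => x ^ ((i : ℕ) + 1)) (fun i => y ^ ((i : ℕ) + 1)) with hwd
  set emb : Fin 3 → Fin pb.dim := fun i => Fin.cast hpbdim.symm i.succ with hembd
  have hembinj : Function.Injective emb := by
    intro i j hij
    rw [hembd] at hij
    simpa using (Fin.cast_injective _ hij)
  set B : Module.Basis (Fin pb.dim ⊕ Fin pb.dim) K (A × A) := pb.basis.prod pb.basis with hBd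
  have hwcomp : θ.toLinearMap ∘ w = B ∘ Sum.map emb emb := by
    funext i
    rcases i with i | i
    · show θ (x ^ ((i : ℕ) + 1)) = B (Sum.map emb emb (Sum.inl i))
      rw [map_pow, hθx, Sum.map_inl, hBd, Module.Basis.prod_apply]
      simp only [Sum.elim_inl, Function.comp_apply, LinearMap.coe_inl]
      rw [pb.basis_eq_pow]
      apply Prod.ext <;> simp [Prod.pow_fst, Prod.pow_snd, hembd, hpbd, hrd]
    · show θ (y ^ ((i : ℕ) + 1)) = B (Sum.map emb emb (Sum.inr i))
      rw [map_pow, hθy, Sum.map_inr, hBd, Module.Basis.prod_apply]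
      simp only [Sum.elim_inr, Function.comp_apply, LinearMap.coe_inr]
      rw [pb.basis_eq_pow]
      apply Prod.ext <;> simp [Prod.pow_fst, Prod.pow_snd, hembd, hpbd, hrd]
  have hgenA : pb.gen = r := by rw [hpbd, hrd]; simp
  have hliw : LinearIndependent K w := by
    apply LinearIndependent.of_comp θ.toLinearMap
    rw [hwcomp]
    exact B.linearIndependent.comp _ (Sum.map_injective.mpr ⟨hembinj, hembinj⟩)
  have hrange : Set.range w = ({x, x ^ 2, x ^ 3, y, y ^ 2, y ^ 3} :
      Set (MvPolynomial (Fin 2) K ⧸ Q)) := by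
    ext z
    constructor
    · rintro ⟨(i | i), rfl⟩ <;> fin_cases i <;>
        simp [hwd, pow_one, Set.mem_insert_iff]
    · intro hz
      simp only [Set.mem_insert_iff, Set.mem_singleton_iff] at hz
      rcases hz with rfl | rfl | rfl | rfl | rfl | rfl
      · exact ⟨Sum.inl 0, by simp [hwd]⟩
      · exact ⟨Sum.inl 1, by simp [hwd]⟩
      · exact ⟨Sum.inl 2, by simp [hwd]⟩
      · exact ⟨Sum.inr 0, by simp [hwd]⟩
      · exact ⟨Sum.inr 1, by simp [hwd]⟩
      · exact ⟨Sum.inr 2, by simp [hwd]⟩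
  have hTsub : T.toSubmodule = N := by
    apply le_antisymm
    · intro v hv
      exact hTleN _ hv
    · intro v hv
      exact hNleT _ hv
  have hfin : Module.finrank K T = 6 := by
    have h1 : Module.finrank K T = Module.finrank K T.toSubmodule := rfl
    rw [h1, hTsub, hNd, ← hrange, finrank_span_eq_card hliw]
    simp
  refine ⟨⟨e, hemul⟩, hfin, hNleT _ huN, ?_⟩
  intro v hv
  refine ⟨hux v (hTleN v hv), ?_⟩
  rw [mul_comm]
  exact hux v (hTleN v hv)
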